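/- Suppose ‖g̃_t‖ ≤ L for all t and η_i = σ/√i is decreasing, and suppose every index i in R_t ∪ Q_t satisfies i ≥ max(1, t − (s_g + s_l)N) and |R_t| + |Q_t| ≤ (2s_g + s_l)(N − 1). Then ∑_{t=1}^T (∑_{i∈R_t} η_i⟨g̃_i,g̃_t⟩ − ∑_{i∈Q_t} η_i⟨g̃_i,g̃_t⟩) ≤ σL²(2s_g + s_l)(s_g + s_l)N² + 2σL²(2s_g + s_l)N√T. -/

import Mathlib

open Finset

lemma step_ineq (m : ℕ) :
    2 * Real.sqrt m + 1 / Real.sqrt (m + 1) ≤ 2 * Real.sqrt (m + 1) := by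
  have hs : (0:ℝ) < Real.sqrt (m+1) := Real.sqrt_pos.2 (by positivity)
  have h1 : Real.sqrt m ^ 2 = (m:ℝ) := Real.sq_sqrt (by positivity)
  have h2 : Real.sqrt (m+1) ^ 2 = (m:ℝ) + 1 := Real.sq_sqrt (by positivity)
  have ht : (0:ℝ) ≤ Real.sqrt m := Real.sqrt_nonneg _
  rw [← sub_nonneg]
  have heq : 2 * Real.sqrt (m+1) - (2 * Real.sqrt m + 1 / Real.sqrt (m+1)) =
      (2 * Real.sqrt (m+1) ^ 2 - (2 * Real.sqrt m * Real.sqrt (m+1) + 1)) /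
        Real.sqrt (m+1) := by
    field_simp
  rw [heq]
  apply div_nonneg _ hs.le
  nlinarith [sq_nonneg (Real.sqrt (m+1) - Real.sqrt m)]

lemma sum_max_aux (c T : ℕ) :
    ∑ t ∈ Icc 1 T, 1 / Real.sqrt ((max 1 (t - c) : ℕ)) ≤
      ((min T c : ℕ) : ℝ) + 2 * Real.sqrt ((T - c : ℕ)) := by
  induction T with
  | zero => simp
  | succ T ih =>
    rw [Finset.sum_Icc_succ_top (Nat.succ_le_succ (Nat.zero_le T))]
    by_cases h : T + 1 ≤ c
    · have h1 : max 1 (T + 1 - c) = 1 := by omega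
      have h4 : T + 1 - c = 0 := by omega
      have h2 : T - c = 0 := by omega
      have h3 : ((min (T+1) c : ℕ) : ℝ) = ((min T c : ℕ) : ℝ) + 1 := by
        have : min (T+1) c = min T c + 1 := by omega
        rw [this]; push_cast; ring
      rw [h2] at ih
      rw [h1, h4, h3]
      simp only [Nat.cast_one, Real.sqrt_one, Nat.cast_zero, Real.sqrt_zero] at ih ⊢
      linarith
    · have hc : c ≤ T := by omega
      have h1 : max 1 (T + 1 - c) = T + 1 - c := by omega
      have h2 : T + 1 - c = (T - c) + 1 := by omega
      have h3 : min (T+1) c = c := by omega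
      have h4 : min T c = c := by omega
      rw [h1, h2, h3]
      rw [h4] at ih
      have hcast : (((T - c) + 1 : ℕ) : ℝ) = ((T - c : ℕ) : ℝ) + 1 := by push_cast; ring
      rw [hcast]
      have := step_ineq (T - c)
      linarith

theorem stale_terms_sum_bound (n : ℕ) (g : ℕ → EuclideanSpace ℝ (Fin n))
    (L σ : ℝ) (hL : 0 < L) (hσ : 0 < σ)
    (sg sl N T : ℕ) (hN : 1 ≤ N)
    (R Q : ℕ → Finset ℕ)
    (hg : ∀ t, ‖g t‖ ≤ L)
    (hidx : ∀ t, ∀ i ∈ R t ∪ Q t, max 1 (t - (sg + sl) * N) ≤ i)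
    (hcard : ∀ t, (R t).card + (Q t).card ≤ (2 * sg + sl) * (N - 1)) :
    ∑ t ∈ Finset.Icc 1 T,
        (∑ i ∈ R t, (σ / Real.sqrt i) * (inner ℝ (g i) (g t) : ℝ) -
          ∑ i ∈ Q t, (σ / Real.sqrt i) * (inner ℝ (g i) (g t) : ℝ)) ≤
      σ * L ^ 2 * (2 * (sg : ℝ) + sl) * ((sg : ℝ) + sl) * (N : ℝ) ^ 2 +
        2 * σ * L ^ 2 * (2 * (sg : ℝ) + sl) * (N : ℝ) * Real.sqrt T := by
  set c := (sg + sl) * N with hc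
  set K : ℝ := (((2 * sg + sl) * (N - 1) : ℕ) : ℝ) with hK
  have hK0 : 0 ≤ K := by positivity
  -- per-t bound
  have hterm : ∀ t, (∑ i ∈ R t, (σ / Real.sqrt i) * (inner ℝ (g i) (g t) : ℝ) -
      ∑ i ∈ Q t, (σ / Real.sqrt i) * (inner ℝ (g i) (g t) : ℝ)) ≤
      K * (σ * L ^ 2 * (1 / Real.sqrt ((max 1 (t - c) : ℕ)))) := by
    intro t
    set m : ℕ := max 1 (t - c) with hm
    have hm1 : 1 ≤ m := le_max_left _ _
    have hsm : (0:ℝ) < Real.sqrt m := Real.sqrt_pos.2 (by exact_mod_cast hm1)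
    set B : ℝ := σ * L ^ 2 / Real.sqrt m with hB
    have hBpos : 0 ≤ B := by positivity
    have key : ∀ i ∈ R t ∪ Q t,
        |(σ / Real.sqrt i) * (inner ℝ (g i) (g t) : ℝ)| ≤ B := by
      intro i hi
      have him : m ≤ i := hidx t i hi
      have hi1 : 1 ≤ i := le_trans hm1 him
      have hsi : (0:ℝ) < Real.sqrt i := Real.sqrt_pos.2 (by exact_mod_cast hi1)
      have hsmi : Real.sqrt m ≤ Real.sqrt i := Real.sqrt_le_sqrt (by exact_mod_cast him)
      have hinner : |(inner ℝ (g i) (g t) : ℝ)| ≤ L ^ 2 := by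
        calc |(inner ℝ (g i) (g t) : ℝ)| ≤ ‖g i‖ * ‖g t‖ := abs_real_inner_le_norm _ _
        _ ≤ L * L := by
            apply mul_le_mul (hg i) (hg t) (norm_nonneg _) hL.le
        _ = L ^ 2 := by ring
      have hdiv : σ / Real.sqrt i ≤ σ / Real.sqrt m :=
        div_le_div_of_nonneg_left hσ.le hsm hsmi
      calc |(σ / Real.sqrt i) * (inner ℝ (g i) (g t) : ℝ)|
          = (σ / Real.sqrt i) * |(inner ℝ (g i) (g t) : ℝ)| := by
            rw [abs_mul, abs_of_nonneg (by positivity)]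
        _ ≤ (σ / Real.sqrt m) * L ^ 2 := by
            apply mul_le_mul hdiv hinner (abs_nonneg _) (by positivity)
        _ = B := by rw [hB]; ring
    have hR : ∑ i ∈ R t, (σ / Real.sqrt i) * (inner ℝ (g i) (g t) : ℝ) ≤
        (R t).card * B := by
      calc ∑ i ∈ R t, (σ / Real.sqrt i) * (inner ℝ (g i) (g t) : ℝ)
          ≤ ∑ i ∈ R t, B := Finset.sum_le_sum (fun i hi =>
            le_trans (le_abs_self _) (key i (Finset.mem_union_left _ hi)))
        _ = (R t).card * B := by rw [Finset.sum_const, nsmul_eq_mul]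
    have hQ : -∑ i ∈ Q t, (σ / Real.sqrt i) * (inner ℝ (g i) (g t) : ℝ) ≤
        (Q t).card * B := by
      rw [← Finset.sum_neg_distrib]
      calc ∑ i ∈ Q t, -((σ / Real.sqrt i) * (inner ℝ (g i) (g t) : ℝ))
          ≤ ∑ i ∈ Q t, B := Finset.sum_le_sum (fun i hi =>
            le_trans (neg_le_abs _) (key i (Finset.mem_union_right _ hi)))
        _ = (Q t).card * B := by rw [Finset.sum_const, nsmul_eq_mul]
    have hcards : ((R t).card : ℝ) + (Q t).card ≤ K := by
      rw [hK]
      exact_mod_cast hcard t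
    have : ∑ i ∈ R t, (σ / Real.sqrt i) * (inner ℝ (g i) (g t) : ℝ) -
        ∑ i ∈ Q t, (σ / Real.sqrt i) * (inner ℝ (g i) (g t) : ℝ) ≤
        (((R t).card : ℝ) + (Q t).card) * B := by
      have := add_le_add hR hQ
      linarith
    calc _ ≤ (((R t).card : ℝ) + (Q t).card) * B := this
      _ ≤ K * B := mul_le_mul_of_nonneg_right hcards hBpos
      _ = K * (σ * L ^ 2 * (1 / Real.sqrt m)) := by rw [hB]; ring
  -- sum bound
  have hsum : ∑ t ∈ Finset.Icc 1 T,
      (∑ i ∈ R t, (σ / Real.sqrt i) * (inner ℝ (g i) (g t) : ℝ) -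
        ∑ i ∈ Q t, (σ / Real.sqrt i) * (inner ℝ (g i) (g t) : ℝ)) ≤
      K * (σ * L ^ 2) * (((min T c : ℕ) : ℝ) + 2 * Real.sqrt ((T - c : ℕ))) := by
    calc ∑ t ∈ Finset.Icc 1 T, _ ≤
        ∑ t ∈ Finset.Icc 1 T, K * (σ * L ^ 2 * (1 / Real.sqrt ((max 1 (t - c) : ℕ)))) :=
          Finset.sum_le_sum (fun t _ => hterm t)
      _ = K * (σ * L ^ 2) * ∑ t ∈ Finset.Icc 1 T, 1 / Real.sqrt ((max 1 (t - c) : ℕ)) := by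
          rw [Finset.mul_sum]; congr 1; ext t; ring
      _ ≤ K * (σ * L ^ 2) * (((min T c : ℕ) : ℝ) + 2 * Real.sqrt ((T - c : ℕ))) := by
          apply mul_le_mul_of_nonneg_left (sum_max_aux c T) (by positivity)
  refine le_trans hsum ?_
  -- numeric wrap-up
  have hKle : K ≤ (2 * (sg:ℝ) + sl) * N := by
    rw [hK]
    have : (2 * sg + sl) * (N - 1) ≤ (2 * sg + sl) * N := by
      apply Nat.mul_le_mul_left; omega
    calc K = (((2 * sg + sl) * (N - 1) : ℕ) : ℝ) := rfl
      _ ≤ (((2 * sg + sl) * N : ℕ) : ℝ) := by exact_mod_cast this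
      _ = (2 * (sg:ℝ) + sl) * N := by push_cast; ring
  have hmin : ((min T c : ℕ) : ℝ) ≤ ((sg:ℝ) + sl) * N := by
    have : min T c ≤ c := min_le_right _ _
    calc ((min T c : ℕ) : ℝ) ≤ (c : ℝ) := by exact_mod_cast this
      _ = ((sg:ℝ) + sl) * N := by rw [hc]; push_cast; ring
  have hsq : Real.sqrt ((T - c : ℕ)) ≤ Real.sqrt T := by
    apply Real.sqrt_le_sqrt
    exact_mod_cast Nat.sub_le T c
  have hmnn : (0:ℝ) ≤ ((min T c : ℕ) : ℝ) + 2 * Real.sqrt ((T - c : ℕ)) := by positivity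
  calc K * (σ * L ^ 2) * (((min T c : ℕ) : ℝ) + 2 * Real.sqrt ((T - c : ℕ)))
      ≤ ((2 * (sg:ℝ) + sl) * N) * (σ * L ^ 2) *
        (((sg:ℝ) + sl) * N + 2 * Real.sqrt T) := by
        apply mul_le_mul
        · exact mul_le_mul_of_nonneg_right hKle (by positivity)
        · linarith
        · exact hmnn
        · positivity
    _ = σ * L ^ 2 * (2 * (sg : ℝ) + sl) * ((sg : ℝ) + sl) * (N : ℝ) ^ 2 +
        2 * σ * L ^ 2 * (2 * (sg : ℝ) + sl) * (N : ℝ) * Real.sqrt T := by ring
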